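/- Let q be a prime number, p a prime with p ≠ q, F an algebraically closed field of characteristic p, ζ ∈ F a primitive q-th root of unity, and ξ ∈ ℂ a primitive q-th root of unity. Then for every integer k ≥ 0: (i) A(k, ξ) ⊆ A(k, ζ) as subsets of ℕ^q; and (ii) card A(k, ζ) − card A(k, ξ) = q·(number of σ-orbits on A(k, ζ) − number of σ-orbits on A(k, ξ)). In the paper's notation, d(k, q, p) − d(k, q) = q·(a(k, q, p) − a(k, q)) when q = n+1 is prime. -/

import Mathlib

/-- `Aset m k η` is the set of multi-indices `I = (I_0, …, I_{m−1}) ∈ ℕ^m` with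
`I_0 + ⋯ + I_{m−1} = k` and `I_0 + I_1·η + ⋯ + I_{m−1}·η^{m−1} = 0` in `L`. -/
def Aset (m k : ℕ) {L : Type*} [CommRing L] (η : L) : Set (Fin m → ℕ) :=
  {I | (∑ i, I i) = k ∧ (∑ i : Fin m, (I i : L) * η ^ (i : ℕ)) = 0}

/-- The cyclic shift `σ(I_0, …, I_{m−1}) = (I_{m−1}, I_0, …, I_{m−2})` on `ℕ^m`. -/
def cshift (m : ℕ) (I : Fin m → ℕ) : Fin m → ℕ := fun i => I ((finRotate m).symm i)

/-- The number of orbits of the cyclic-shift action on a subset `A ⊆ ℕ^m`. -/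
noncomputable def orbitCount (m : ℕ) (A : Set (Fin m → ℕ)) : ℕ :=
  Set.ncard ((fun I => {J | ∃ n : ℕ, J = (cshift m)^[n] I}) '' A)

open Finset Polynomial
open Fin.NatCast

lemma pow_mod_eq {L : Type*} [CommRing L] {η : L} {q : ℕ} (h : η ^ q = 1) (a : ℕ) :
    η ^ (a % q) = η ^ a := by
  conv_rhs => rw [← Nat.mod_add_div a q]
  rw [pow_add, pow_mul, h, one_pow, mul_one]

lemma cshift_apply (m : ℕ) (I : Fin (m + 1) → ℕ) (i : Fin (m + 1)) :
    cshift (m + 1) I i = I (i - 1) := by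
  unfold cshift
  congr 1
  rw [Equiv.symm_apply_eq, finRotate_succ_apply, sub_add_cancel]

lemma cshift_iterate (m n : ℕ) (I : Fin (m + 1) → ℕ) (i : Fin (m + 1)) :
    (cshift (m + 1))^[n] I i = I (i - (n : Fin (m + 1))) := by
  induction n generalizing i with
  | zero => simp
  | succ n ih =>
    rw [Function.iterate_succ_apply', cshift_apply, ih]
    congr 1
    push_cast
    abel

lemma cshift_fixed_iff (m : ℕ) (I : Fin (m + 1) → ℕ) :
    cshift (m + 1) I = I ↔ ∀ i, I i = I 0 := by
  constructor
  · intro h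
    have key : ∀ n : ℕ, I ((n : Fin (m + 1))) = I 0 := by
      intro n
      induction n with
      | zero => simp
      | succ n ih =>
        have h2 := congrFun h ((n : Fin (m + 1)) + 1)
        rw [cshift_apply, add_sub_cancel_right] at h2
        rw [Nat.cast_add, Nat.cast_one, ← h2, ih]
    intro i
    have := key i.val
    rwa [Fin.cast_val_eq_self] at this
  · intro h
    funext i
    rw [cshift_apply, h, h i]

lemma cshift_injective (m : ℕ) : Function.Injective (cshift m) := by
  intro I J h
  funext i
  have := congrFun h (finRotate m i)
  unfold cshift at this
  simpa only [Equiv.symm_apply_apply] using this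

lemma cshift_mem_Aset {m k : ℕ} {L : Type*} [CommRing L] {η : L} (hη : η ^ (m + 2) = 1)
    {I : Fin (m + 2) → ℕ} (hI : I ∈ Aset (m + 2) k η) : cshift (m + 2) I ∈ Aset (m + 2) k η := by
  obtain ⟨h1, h2⟩ := hI
  constructor
  · rw [← h1]
    exact Fintype.sum_equiv (Equiv.subRight 1) _ _ (fun i => by
      rw [cshift_apply]; rfl)
  · have step : ∀ i : Fin (m + 2), (cshift (m + 2) I i : L) * η ^ (i : ℕ) =
        (fun j : Fin (m + 2) => (I j : L) * (η ^ (j : ℕ) * η)) (Equiv.subRight (1 : Fin (m + 2)) i) := by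
      intro i
      simp only [Equiv.subRight_apply, cshift_apply]
      congr 1
      have hv : (((i - 1 + 1 : Fin (m + 2))) : ℕ) = (((i - 1 : Fin (m + 2)) : ℕ) + 1) % (m + 2) := by
        rw [Fin.val_add, Fin.val_one]
      have h3 : η ^ (i : ℕ) = η ^ ((((i - 1 : Fin (m + 2)) : ℕ) + 1) % (m + 2)) := by
        rw [← hv, sub_add_cancel]
      rw [h3, pow_mod_eq hη, pow_succ]
    calc ∑ i : Fin (m + 2), (cshift (m + 2) I i : L) * η ^ (i : ℕ)
        = ∑ j : Fin (m + 2), (I j : L) * (η ^ (j : ℕ) * η) := by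
          rw [Finset.sum_congr rfl (fun i _ => step i)]
          exact Equiv.sum_comp (Equiv.subRight (1 : Fin (m + 2)))
            (fun j : Fin (m + 2) => (I j : L) * (η ^ (j : ℕ) * η))
      _ = (∑ j : Fin (m + 2), (I j : L) * η ^ (j : ℕ)) * η := by
          rw [Finset.sum_mul]; exact Finset.sum_congr rfl (fun j _ => by ring)
      _ = 0 := by rw [h2, zero_mul]

lemma const_mem_Aset {m k : ℕ} {L : Type*} [CommRing L] [IsDomain L] {η : L}
    (hη : IsPrimitiveRoot η (m + 2)) {I : Fin (m + 2) → ℕ}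
    (hc : ∀ i, I i = I 0) (hsum : ∑ i, I i = k) : I ∈ Aset (m + 2) k η := by
  refine ⟨hsum, ?_⟩
  have hg : ∑ i : Fin (m + 2), η ^ (i : ℕ) = 0 := by
    rw [Fin.sum_univ_eq_sum_range (fun n => η ^ n)]
    exact hη.geom_sum_eq_zero (by omega)
  calc ∑ i : Fin (m + 2), (I i : L) * η ^ (i : ℕ)
      = ∑ i : Fin (m + 2), (I 0 : L) * η ^ (i : ℕ) :=
        Finset.sum_congr rfl (fun i _ => by rw [hc i])
    _ = (I 0 : L) * ∑ i : Fin (m + 2), η ^ (i : ℕ) := by rw [Finset.mul_sum]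
    _ = 0 := by rw [hg, mul_zero]

lemma eq_const_of_mem_Aset_xi {m k : ℕ} (hq : (m + 2).Prime) {ξ : ℂ}
    (hξ : IsPrimitiveRoot ξ (m + 2)) {I : Fin (m + 2) → ℕ} (hI : I ∈ Aset (m + 2) k ξ) :
    ∀ i, I i = I 0 := by
  obtain ⟨-, h2⟩ := hI
  set c : ℚ := (I (Fin.last (m + 1)) : ℚ) with hc
  set a : ℕ → ℚ := fun n => (I (n : Fin (m + 2)) : ℚ) - c with ha
  set g : ℚ[X] := ∑ n ∈ range (m + 1), C (a n) * X ^ n with hg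
  -- last coefficient is zero
  have halast : a (m + 1) = 0 := by
    simp only [ha]
    have : ((m + 1 : ℕ) : Fin (m + 2)) = Fin.last (m + 1) := by
      rw [Fin.ext_iff, Fin.val_natCast]
      simp [Nat.mod_eq_of_lt, Fin.last]
    rw [this]; ring
  -- aeval ξ g = 0
  have hgeom : ∑ n ∈ range (m + 2), ξ ^ n = 0 := hξ.geom_sum_eq_zero (by omega)
  have hrel : ∑ n ∈ range (m + 2), (I (n : Fin (m + 2)) : ℂ) * ξ ^ n = 0 := by
    rw [← Fin.sum_univ_eq_sum_range (fun n => (I (n : Fin (m + 2)) : ℂ) * ξ ^ n)]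
    rw [← h2]
    exact Finset.sum_congr rfl (fun i _ => by rw [Fin.cast_val_eq_self])
  have heval : aeval ξ g = 0 := by
    rw [hg]
    simp only [map_sum, map_mul, aeval_C, aeval_X_pow]
    have hext : ∑ n ∈ range (m + 2), (algebraMap ℚ ℂ) (a n) * ξ ^ n =
        ∑ n ∈ range (m + 1), (algebraMap ℚ ℂ) (a n) * ξ ^ n := by
      rw [Finset.sum_range_succ, halast]
      simp
    rw [← hext]
    have hcast : ∀ n : ℕ, ((algebraMap ℚ ℂ) (a n)) = ((I (n : Fin (m + 2)) : ℂ) - (c : ℂ)) := by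
      intro n
      simp only [ha, hc]
      push_cast
      ring
    rw [Finset.sum_congr rfl (fun n _ => by rw [hcast n, sub_mul])]
    rw [Finset.sum_sub_distrib, hrel, ← Finset.mul_sum, hgeom]
    ring
  -- g must be zero by degree comparison with the minimal polynomial
  have hgzero : g = 0 := by
    by_contra hne
    have hdeg : (minpoly ℚ ξ).degree ≤ g.degree := minpoly.degree_le_of_ne_zero ℚ ξ hne heval
    have hmin : minpoly ℚ ξ = cyclotomic (m + 2) ℚ :=
      (Polynomial.cyclotomic_eq_minpoly_rat hξ (by omega)).symm
    have hnd : (minpoly ℚ ξ).natDegree = m + 1 := by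
      rw [hmin, Polynomial.natDegree_cyclotomic, Nat.totient_prime hq]
      omega
    have hgle : g.natDegree ≤ m := by
      rw [hg]
      exact Polynomial.natDegree_sum_le_of_forall_le _ _
        (fun n hn => le_trans (Polynomial.natDegree_C_mul_X_pow_le _ _)
          (Nat.lt_succ_iff.mp (Finset.mem_range.mp hn)))
    have h1 : (minpoly ℚ ξ).natDegree ≤ g.natDegree :=
      Polynomial.natDegree_le_natDegree hdeg
    omega
  -- conclude: each coefficient vanishes
  have hcoeff : ∀ n, n < m + 1 → a n = 0 := by
    intro n hn
    have : g.coeff n = a n := by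
      rw [hg, Polynomial.finset_sum_coeff]
      rw [Finset.sum_congr rfl (fun i _ => Polynomial.coeff_C_mul_X_pow (a i) i n)]
      rw [Finset.sum_ite_eq (range (m + 1)) n a]
      simp [Finset.mem_range.mpr hn]
    rw [hgzero] at this
    simpa using this.symm
  have hconst : ∀ i : Fin (m + 2), (I i : ℚ) = c := by
    intro i
    rcases Nat.lt_or_ge i.val (m + 1) with h | h
    · have h3 := hcoeff i.val h
      simp only [ha] at h3
      rw [Fin.cast_val_eq_self] at h3
      linarith [h3]
    · have : i = Fin.last (m + 1) := by
        apply Fin.ext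
        have := i.isLt
        simp only [Fin.val_last]
        omega
      rw [this]
  intro i
  have h5 := hconst i
  have h6 := hconst 0
  exact_mod_cast h5.trans h6.symm

lemma Aset_finite (m k : ℕ) {L : Type*} [CommRing L] (η : L) : (Aset m k η).Finite := by
  have hsub : Aset m k η ⊆ Set.pi Set.univ (fun _ : Fin m => Set.Iic k) := by
    intro I hI i _
    exact le_trans (Finset.single_le_sum (f := I) (fun j _ => Nat.zero_le _)
      (Finset.mem_univ i)) hI.1.le
  exact (Set.Finite.pi (fun _ => Set.finite_Iic k)).subset hsub

section Orbits

variable (m : ℕ)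

/-- The orbit of `I` under the cyclic shift on `Fin (m+2) → ℕ`. -/
def orb (I : Fin (m + 2) → ℕ) : Set (Fin (m + 2) → ℕ) :=
  {J | ∃ n : ℕ, J = (cshift (m + 2))^[n] I}

lemma cshift_iterate_q (I : Fin (m + 2) → ℕ) : (cshift (m + 2))^[m + 2] I = I := by
  funext i
  rw [cshift_iterate]
  congr 1
  rw [Fin.natCast_self, sub_zero]

lemma cshift_iterate_mul_q (t : ℕ) (I : Fin (m + 2) → ℕ) :
    (cshift (m + 2))^[(m + 2) * t] I = I := by
  rw [Function.iterate_mul]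
  exact Function.iterate_fixed (cshift_iterate_q m I) t

lemma cshift_iterate_mod (n : ℕ) (I : Fin (m + 2) → ℕ) :
    (cshift (m + 2))^[n] I = (cshift (m + 2))^[n % (m + 2)] I := by
  conv_lhs => rw [← Nat.mod_add_div n (m + 2)]
  rw [Function.iterate_add_apply, cshift_iterate_mul_q]

lemma mem_orb_self (I : Fin (m + 2) → ℕ) : I ∈ orb m I := ⟨0, rfl⟩

lemma orb_symm {I J : Fin (m + 2) → ℕ} (h : J ∈ orb m I) : I ∈ orb m J := by
  obtain ⟨n, rfl⟩ := h
  refine ⟨(m + 2) * n - n, ?_⟩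
  rw [← Function.iterate_add_apply]
  rw [Nat.sub_add_cancel (Nat.le_mul_of_pos_left n (by omega))]
  rw [cshift_iterate_mul_q]

lemma orb_eq_of_mem {I J : Fin (m + 2) → ℕ} (h : J ∈ orb m I) : orb m J = orb m I := by
  obtain ⟨n, rfl⟩ := h
  ext K
  constructor
  · rintro ⟨a, rfl⟩
    exact ⟨a + n, by rw [Function.iterate_add_apply]⟩
  · rintro ⟨a, rfl⟩
    obtain ⟨b, hb⟩ := orb_symm m ⟨n, rfl⟩
    refine ⟨a + b, ?_⟩
    rw [Function.iterate_add_apply, ← hb]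

lemma orb_of_fixed {I : Fin (m + 2) → ℕ} (h : cshift (m + 2) I = I) : orb m I = {I} := by
  ext J
  simp only [orb, Set.mem_setOf_eq, Set.mem_singleton_iff]
  constructor
  · rintro ⟨n, rfl⟩
    exact Function.iterate_fixed h n
  · rintro rfl
    exact ⟨0, rfl⟩

lemma fixed_of_iterate {I : Fin (m + 2) → ℕ} {d : ℕ} (hq : (m + 2).Prime) (hd0 : 0 < d)
    (hdm : d < m + 2) (h : (cshift (m + 2))^[d] I = I) : cshift (m + 2) I = I := by
  have hcop : Nat.Coprime (m + 2) d :=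
    (hq.coprime_iff_not_dvd).mpr (Nat.not_dvd_of_pos_of_lt hd0 hdm)
  obtain ⟨x, -, hx⟩ := Nat.exists_mul_mod_eq_one_of_coprime hcop.symm (by omega)
  have h1 : (cshift (m + 2))^[d * x] I = I := by
    rw [Function.iterate_mul]
    exact Function.iterate_fixed h x
  rw [cshift_iterate_mod, hx] at h1
  simpa using h1

lemma orb_eq_image (I : Fin (m + 2) → ℕ) :
    orb m I = ↑((Finset.range (m + 2)).image (fun n => (cshift (m + 2))^[n] I)) := by
  ext J
  simp only [orb, Set.mem_setOf_eq, Finset.coe_image, Set.mem_image, Finset.mem_coe,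
    Finset.mem_range]
  constructor
  · rintro ⟨n, rfl⟩
    exact ⟨n % (m + 2), Nat.mod_lt n (by omega), (cshift_iterate_mod m n I).symm⟩
  · rintro ⟨n, -, rfl⟩
    exact ⟨n, rfl⟩

lemma orb_ncard_of_not_fixed (hq : (m + 2).Prime) {I : Fin (m + 2) → ℕ}
    (h : cshift (m + 2) I ≠ I) : (orb m I).ncard = m + 2 := by
  rw [orb_eq_image, Set.ncard_coe_finset]
  rw [Finset.card_image_of_injOn, Finset.card_range]
  have key : ∀ a b : ℕ, a < b → b < m + 2 →
      (cshift (m + 2))^[a] I = (cshift (m + 2))^[b] I → False := by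
    intro a b hlt hb hab
    have hinj : Function.Injective ((cshift (m + 2))^[a]) :=
      Function.Injective.iterate (cshift_injective (m + 2)) a
    have hd : (cshift (m + 2))^[b - a] I = I := by
      apply hinj
      rw [← Function.iterate_add_apply, Nat.add_sub_cancel' hlt.le, hab]
    exact h (fixed_of_iterate m hq (by omega) (by omega) hd)
  intro a ha b hb hab
  simp only [Finset.coe_range, Set.mem_Iio] at ha hb
  dsimp only at hab
  rcases lt_trichotomy a b with hl | he | hl
  · exact absurd hab (by intro hh; exact key a b hl hb hh)
  · exact he
  · exact absurd hab.symm (by intro hh; exact key b a hl ha hh)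

end Orbits

lemma iterate_mem_Aset {m k : ℕ} {L : Type*} [CommRing L] {η : L} (hη : η ^ (m + 2) = 1)
    {I : Fin (m + 2) → ℕ} (hI : I ∈ Aset (m + 2) k η) (n : ℕ) :
    (cshift (m + 2))^[n] I ∈ Aset (m + 2) k η := by
  induction n with
  | zero => exact hI
  | succ n ih => rw [Function.iterate_succ_apply']; exact cshift_mem_Aset hη ih

/-- Let `q` be a prime, `p` a prime with `p ≠ q`, `F` an algebraically closed field of
characteristic `p`, `ζ ∈ F` a primitive `q`-th root of unity and `ξ ∈ ℂ` a primitive `q`-th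
root of unity. Then for every `k ≥ 0`: (i) `A(k, ξ) ⊆ A(k, ζ)` as subsets of `ℕ^q`; and
(ii) `card A(k, ζ) − card A(k, ξ) = q·(#σ-orbits on A(k, ζ) − #σ-orbits on A(k, ξ))`. -/
theorem card_Aset_sub_card_Aset_eq (q p : ℕ) (hq : q.Prime) (hp : p.Prime) (hpq : p ≠ q)
    (F : Type*) [Field F] [IsAlgClosed F] [CharP F p]
    (ζ : F) (hζ : IsPrimitiveRoot ζ q) (ξ : ℂ) (hξ : IsPrimitiveRoot ξ q) (k : ℕ) :
    Aset q k ξ ⊆ Aset q k ζ ∧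
      ((Aset q k ζ).ncard : ℤ) - ((Aset q k ξ).ncard : ℤ) =
        (q : ℤ) * ((orbitCount q (Aset q k ζ) : ℤ) - (orbitCount q (Aset q k ξ) : ℤ)) := by
  have h2q := hq.two_le
  obtain ⟨m, rfl⟩ : ∃ m, q = m + 2 := ⟨q - 2, by omega⟩
  classical
  have hζ1 : ζ ^ (m + 2) = 1 := hζ.pow_eq_one
  have hsub : Aset (m + 2) k ξ ⊆ Aset (m + 2) k ζ := by
    intro I hI
    exact const_mem_Aset hζ (eq_const_of_mem_Aset_xi hq hξ hI) hI.1
  refine ⟨hsub, ?_⟩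
  have hfix : ∀ I, I ∈ Aset (m + 2) k ξ ↔ I ∈ Aset (m + 2) k ζ ∧ cshift (m + 2) I = I := by
    intro I
    constructor
    · intro hI
      exact ⟨hsub hI, (cshift_fixed_iff (m + 1) I).mpr (eq_const_of_mem_Aset_xi hq hξ hI)⟩
    · rintro ⟨hI, hfixI⟩
      exact const_mem_Aset hξ ((cshift_fixed_iff (m + 1) I).mp hfixI) hI.1
  have hfζ : (Aset (m + 2) k ζ).Finite := Aset_finite _ _ _
  have hfξ : (Aset (m + 2) k ξ).Finite := Aset_finite _ _ _
  set S : Finset (Fin (m + 2) → ℕ) := hfζ.toFinset with hS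
  set S0 : Finset (Fin (m + 2) → ℕ) := hfξ.toFinset with hS0
  have hmemS : ∀ I, I ∈ S ↔ I ∈ Aset (m + 2) k ζ := fun I => hfζ.mem_toFinset
  have hmemS0 : ∀ I, I ∈ S0 ↔ I ∈ Aset (m + 2) k ξ := fun I => hfξ.mem_toFinset
  have hS0sub : S0 ⊆ S := by
    intro I hI
    exact (hmemS I).mpr (hsub ((hmemS0 I).mp hI))
  set T : Finset (Set (Fin (m + 2) → ℕ)) := S.image (orb m) with hT
  set T1 : Finset (Set (Fin (m + 2) → ℕ)) := S0.image (orb m) with hT1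
  have hT1T : T1 ⊆ T := Finset.image_subset_image hS0sub
  -- orbit counts
  have hOζ : orbitCount (m + 2) (Aset (m + 2) k ζ) = T.card := by
    show Set.ncard ((fun I => {J | ∃ n : ℕ, J = (cshift (m + 2))^[n] I}) '' (Aset (m + 2) k ζ))
      = T.card
    have himg : (fun I => {J | ∃ n : ℕ, J = (cshift (m + 2))^[n] I}) '' (Aset (m + 2) k ζ)
        = ↑T := by
      rw [hT, Finset.coe_image, hS, Set.Finite.coe_toFinset]
      rfl
    rw [himg, Set.ncard_coe_finset]
  have hOξ : orbitCount (m + 2) (Aset (m + 2) k ξ) = T1.card := by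
    show Set.ncard ((fun I => {J | ∃ n : ℕ, J = (cshift (m + 2))^[n] I}) '' (Aset (m + 2) k ξ))
      = T1.card
    have himg : (fun I => {J | ∃ n : ℕ, J = (cshift (m + 2))^[n] I}) '' (Aset (m + 2) k ξ)
        = ↑T1 := by
      rw [hT1, Finset.coe_image, hS0, Set.Finite.coe_toFinset]
      rfl
    rw [himg, Set.ncard_coe_finset]
  have hCζ : (Aset (m + 2) k ζ).ncard = S.card := Set.ncard_eq_toFinset_card _ hfζ
  have hCξ : (Aset (m + 2) k ξ).ncard = S0.card := Set.ncard_eq_toFinset_card _ hfξ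
  -- S0 injects into orbits
  have hsing : ∀ I ∈ S0, orb m I = {I} := by
    intro I hI
    exact orb_of_fixed m ((hfix I).mp ((hmemS0 I).mp hI)).2
  have hS0T1 : T1.card = S0.card := by
    rw [hT1]
    apply Finset.card_image_of_injOn
    intro I hI J hJ hIJ
    rw [hsing I (Finset.mem_coe.mp hI), hsing J (Finset.mem_coe.mp hJ)] at hIJ
    exact Set.singleton_eq_singleton_iff.mp hIJ
  -- fibers are orbits
  have hfibeq : ∀ J ∈ S, ↑(S.filter (fun I => orb m I = orb m J)) = orb m J := by
    intro J hJ
    ext I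
    simp only [Finset.coe_filter, Set.mem_setOf_eq, hmemS]
    constructor
    · rintro ⟨hIS, hfI⟩
      rw [← hfI]
      exact mem_orb_self m I
    · intro hIorb
      refine ⟨?_, orb_eq_of_mem m hIorb⟩
      obtain ⟨n, rfl⟩ := hIorb
      exact iterate_mem_Aset hζ1 ((hmemS J).mp hJ) n
  have hfibcard : ∀ J ∈ S, (S.filter (fun I => orb m I = orb m J)).card = (orb m J).ncard := by
    intro J hJ
    rw [← Set.ncard_coe_finset (S.filter (fun I => orb m I = orb m J)), hfibeq J hJ]
  -- fiberwise count
  have hcount : S.card = ∑ O ∈ T, (S.filter (fun I => orb m I = O)).card :=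
    Finset.card_eq_sum_card_fiberwise (fun I hI => Finset.mem_image_of_mem (orb m) hI)
  have hsum1 : ∑ O ∈ T1, (S.filter (fun I => orb m I = O)).card = T1.card := by
    rw [Finset.sum_congr rfl (g := fun _ => 1) ?_, Finset.sum_const, smul_eq_mul, mul_one]
    intro O hO
    obtain ⟨J, hJ0, rfl⟩ := Finset.mem_image.mp hO
    rw [hfibcard J (hS0sub hJ0), hsing J hJ0, Set.ncard_singleton]
  have hsum2 : ∑ O ∈ T \ T1, (S.filter (fun I => orb m I = O)).card
      = (T.card - T1.card) * (m + 2) := by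
    rw [Finset.sum_congr rfl (g := fun _ => m + 2) ?_, Finset.sum_const, smul_eq_mul,
      Finset.card_sdiff_of_subset hT1T]
    intro O hO
    obtain ⟨hOT, hOnT1⟩ := Finset.mem_sdiff.mp hO
    obtain ⟨J, hJ, rfl⟩ := Finset.mem_image.mp hOT
    have hnfix : cshift (m + 2) J ≠ J := by
      intro hfixJ
      have : J ∈ S0 := (hmemS0 J).mpr ((hfix J).mpr ⟨(hmemS J).mp hJ, hfixJ⟩)
      exact hOnT1 (Finset.mem_image_of_mem (orb m) this)
    rw [hfibcard J hJ]
    exact orb_ncard_of_not_fixed m hq hnfix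
  have key : S.card = T1.card + (T.card - T1.card) * (m + 2) := by
    rw [hcount, ← Finset.sum_sdiff hT1T, hsum1, hsum2, add_comm]
  have hle : T1.card ≤ T.card := Finset.card_le_card hT1T
  rw [hCζ, hCξ, hOζ, hOξ]
  zify [hle] at key
  rw [key, ← hS0T1]
  push_cast
  ring
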